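/- In a real inner product space, the intersection of all closed balls containing two points p and q equals the closed segment [p, q]. -/

import Mathlib

set_option maxHeartbeats 1000000 in
open RealInnerProductSpace in


/-- In a real inner product space, the intersection of all closed balls containing
two points `p` and `q` equals the segment `[p, q]`. -/
theorem stmt_17 {E : Type*} [NormedAddCommGroup E] [InnerProductSpace ℝ E]
    (p q : E) :
    ⋂₀ {B : Set E | ∃ (c : E) (R : ℝ), 0 ≤ R ∧ B = Metric.closedBall c R ∧
        p ∈ B ∧ q ∈ B} = segment ℝ p q := by
  apply Set.Subset.antisymm
  · intro x hx
    have hball : ∀ c R, 0 ≤ R → dist p c ≤ R → dist q c ≤ R → dist x c ≤ R := by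
      intro c R hR hp hq
      exact hx _ ⟨c, R, hR, rfl, by simpa [Metric.mem_closedBall] using hp,
        by simpa [Metric.mem_closedBall] using hq⟩
    by_cases hpq : p = q
    · subst hpq
      have := hball p 0 le_rfl (by simp) (by simp)
      have hx0 : x = p := by
        rw [dist_le_zero] at this; exact this
      simp [hx0]
    -- main case
    set m : E := (2:ℝ)⁻¹ • (p + q) with hm
    set d : E := q - p with hd
    have hd0 : d ≠ 0 := sub_ne_zero.mpr (fun h => hpq h.symm)
    set v : E := x - m with hv
    set a : ℝ := (⟪v, d⟫) / ‖d‖^2 with ha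
    set w : E := v - a • d with hw
    have hdn : ‖d‖^2 ≠ 0 := pow_ne_zero _ (norm_ne_zero_iff.mpr hd0)
    have hwd : ⟪w, d⟫ = 0 := by
      rw [hw, inner_sub_left, real_inner_smul_left, real_inner_self_eq_norm_sq, ha]
      field_simp
      ring
    have hdw : ⟪d, w⟫ = 0 := by rw [real_inner_comm]; exact hwd
    have hpm : p - m = (-(2:ℝ)⁻¹) • d := by rw [hm, hd]; module
    have hqm : q - m = (2:ℝ)⁻¹ • d := by rw [hm, hd]; module
    have hpw : ⟪p - m, w⟫ = 0 := by rw [hpm, real_inner_smul_left, hdw]; ring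
    have hqw : ⟪q - m, w⟫ = 0 := by rw [hqm, real_inner_smul_left, hdw]; ring
    have hvw : ⟪v, w⟫ = ‖w‖^2 := by
      have : v = w + a • d := by rw [hw]; abel
      rw [this, inner_add_left, real_inner_smul_left, hdw, real_inner_self_eq_norm_sq]
      ring
    -- Step A : w = 0
    have hw0 : w = 0 := by
      by_contra hw0
      have hwn : (0:ℝ) < ‖w‖^2 := pow_pos (norm_pos_iff.mpr hw0) 2
      set t : ℝ := max 0 ((‖p - m‖^2 - ‖v‖^2)/(2*‖w‖^2)) + 1 with ht
      have ht' : (‖p - m‖^2 - ‖v‖^2)/(2*‖w‖^2) < t := by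
        have := le_max_right 0 ((‖p - m‖^2 - ‖v‖^2)/(2*‖w‖^2))
        linarith
      set c : E := m - t • w with hc
      set R : ℝ := Real.sqrt (‖p - m‖^2 + t^2*‖w‖^2) with hR
      have hRsq : R^2 = ‖p - m‖^2 + t^2*‖w‖^2 := by
        rw [hR, Real.sq_sqrt (by positivity)]
      have hpc : p - c = (p - m) + t • w := by rw [hc]; abel
      have hqc : q - c = (q - m) + t • w := by rw [hc]; abel
      have hxc : x - c = v + t • w := by rw [hc, hv]; abel
      have hnm : ‖q - m‖ ^ 2 = ‖p - m‖ ^ 2 := by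
        rw [hpm, hqm, norm_smul, norm_smul]; norm_num
      have hdp : dist p c ≤ R := by
        have h : dist p c ^ 2 = R^2 := by
          rw [dist_eq_norm, hpc, norm_add_sq_real, real_inner_smul_right, hpw,
            norm_smul, mul_pow, Real.norm_eq_abs, sq_abs, hRsq]
          ring
        nlinarith [dist_nonneg (x := p) (y := c), Real.sqrt_nonneg (‖p - m‖^2 + t^2*‖w‖^2)]
      have hdq : dist q c ≤ R := by
        have h : dist q c ^ 2 = R^2 := by
          rw [dist_eq_norm, hqc, norm_add_sq_real, real_inner_smul_right, hqw,
            norm_smul, mul_pow, Real.norm_eq_abs, sq_abs, hRsq, hnm]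
          ring
        nlinarith [dist_nonneg (x := q) (y := c), Real.sqrt_nonneg (‖p - m‖^2 + t^2*‖w‖^2)]
      have hdx : dist x c ≤ R := hball c R (Real.sqrt_nonneg _) hdp hdq
      have hxc2 : dist x c ^ 2 = ‖v‖^2 + 2*t*‖w‖^2 + t^2*‖w‖^2 := by
        rw [dist_eq_norm, hxc, norm_add_sq_real, real_inner_smul_right, hvw,
          norm_smul, mul_pow, Real.norm_eq_abs, sq_abs]
        ring
      have hle : dist x c ^ 2 ≤ R ^ 2 := by
        nlinarith [dist_nonneg (x := x) (y := c), Real.sqrt_nonneg (‖p - m‖^2 + t^2*‖w‖^2)]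
      rw [hxc2, hRsq] at hle
      have : t ≤ (‖p - m‖^2 - ‖v‖^2)/(2*‖w‖^2) := by
        rw [le_div_iff₀ (by positivity)]
        nlinarith
      linarith
    have hxad : x - m = a • d := by
      have : v - a • d = 0 := hw0
      rw [hv] at *
      have := sub_eq_zero.mp this
      exact this
    -- Step B : bounds on a
    have hxp : x - p = (a + 2⁻¹) • d := by
      have : x = m + a • d := by rw [← hxad]; abel
      rw [this, hm, hd]; module
    have hxq : x - q = (a - 2⁻¹) • d := by
      have : x = m + a • d := by rw [← hxad]; abel
      rw [this, hm, hd]; module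
    have h1 : dist x q ≤ ‖d‖ := by
      have := hball q ‖d‖ (norm_nonneg d) (by rw [dist_eq_norm, show p - q = -d by rw [hd]; abel, norm_neg])
        (by simp)
      exact this
    have h2 : dist x p ≤ ‖d‖ := by
      have := hball p ‖d‖ (norm_nonneg d) (by simp)
        (by rw [dist_eq_norm, show q - p = d from hd.symm])
      exact this
    have hdpos : (0:ℝ) < ‖d‖ := norm_pos_iff.mpr hd0
    have hb1 : |a + 2⁻¹| ≤ 1 := by
      rw [dist_eq_norm, hxp, norm_smul, Real.norm_eq_abs] at h2
      nlinarith [abs_nonneg (a + 2⁻¹)]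
    have hb2 : |a - 2⁻¹| ≤ 1 := by
      rw [dist_eq_norm, hxq, norm_smul, Real.norm_eq_abs] at h1
      nlinarith [abs_nonneg (a - 2⁻¹)]
    have ha1 : a ≤ 2⁻¹ := by
      have := abs_le.mp hb1
      linarith [this.2]
    have ha2 : -2⁻¹ ≤ a := by
      have := abs_le.mp hb2
      linarith [(abs_le.mp hb2).1]
    refine ⟨2⁻¹ - a, 2⁻¹ + a, by linarith, by linarith, by ring, ?_⟩
    have : x = m + a • d := by rw [← hxad]; abel
    rw [this, hm, hd]; module
  · rintro x hx B ⟨c, R, hR, rfl, hp, hq⟩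
    exact (convex_closedBall c R).segment_subset hp hq hx
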